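/- Let r > 0 and let f : ℝ → ℝ be differentiable with f(0) = 0 and f'(x) ≤ f(x)² + r² for all x ≥ 0. Then for every x with 0 ≤ x < π/(2r) one has f(x) ≤ r·tan(r·x). -/

import Mathlib

theorem riccati_comparison_one_sided (r : ℝ) (hr : 0 < r) (f : ℝ → ℝ)
    (hdiff : Differentiable ℝ f) (h0 : f 0 = 0)
    (hsub : ∀ x : ℝ, 0 ≤ x → deriv f x ≤ (f x) ^ 2 + r ^ 2) :
    ∀ x : ℝ, 0 ≤ x → x < Real.pi / (2 * r) → f x ≤ r * Real.tan (r * x) := by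
  set g : ℝ → ℝ := fun x => Real.arctan (f x / r) - r * x with hg
  have hgderiv : ∀ x : ℝ, HasDerivAt g
      ((1 / (1 + (f x / r) ^ 2)) * (deriv f x / r) - r) x := by
    intro x
    have h1 : HasDerivAt (fun x => f x / r) (deriv f x / r) x :=
      (hdiff x).hasDerivAt.div_const r
    have h2 : HasDerivAt (fun x => Real.arctan (f x / r))
        ((1 / (1 + (f x / r) ^ 2)) * (deriv f x / r)) x :=
      by have := (Real.hasDerivAt_arctan (f x / r)).comp x h1; exact this
    have h3 : HasDerivAt (fun y => Real.arctan (f y / r) - r * id y)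
        ((1 / (1 + (f x / r) ^ 2)) * (deriv f x / r) - r * 1) x :=
      h2.sub ((hasDerivAt_id x).const_mul r)
    simpa [hg] using h3
  have hgmono : AntitoneOn g (Set.Ici 0) := by
    apply antitoneOn_of_deriv_nonpos (convex_Ici 0)
    · exact (Continuous.sub ((Real.continuous_arctan).comp
        ((hdiff.continuous).div_const r)) (continuous_const.mul continuous_id)).continuousOn
    · intro x hx
      exact ((hgderiv x).differentiableAt).differentiableWithinAt
    · intro x hx
      rw [interior_Ici] at hx
      rw [(hgderiv x).deriv]
      have hx0 : (0:ℝ) ≤ x := le_of_lt hx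
      have hf := hsub x hx0
      have hpos : (0:ℝ) < 1 + (f x / r) ^ 2 := by positivity
      have hu : (f x / r) ^ 2 * r ^ 2 = f x ^ 2 := by field_simp
      rw [sub_nonpos, one_div, inv_mul_le_iff₀ hpos, div_le_iff₀ hr]
      nlinarith [hu]
  intro x hx hxlt
  have hrx : r * x < Real.pi / 2 := by
    rw [lt_div_iff₀ (by positivity : (0:ℝ) < 2 * r)] at hxlt
    nlinarith [Real.pi_pos]
  have hgle : g x ≤ g 0 := hgmono (Set.mem_Ici.mpr le_rfl) (Set.mem_Ici.mpr hx) hx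
  have hg0 : g 0 = 0 := by simp [hg, h0]
  have harc : Real.arctan (f x / r) ≤ r * x := by
    have := hgle
    rw [hg0] at this
    simpa [hg, sub_nonpos] using this
  have htan : f x / r ≤ Real.tan (r * x) := by
    have h1 : Real.tan (Real.arctan (f x / r)) ≤ Real.tan (r * x) := by
      apply Real.strictMonoOn_tan.monotoneOn
      · exact ⟨Real.neg_pi_div_two_lt_arctan _, Real.arctan_lt_pi_div_two _⟩
      · constructor
        · have : 0 ≤ r * x := by positivity
          linarith [Real.pi_div_two_pos]
        · exact hrx
      · exact harc
    rwa [Real.tan_arctan] at h1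
  calc f x = r * (f x / r) := by field_simp
    _ ≤ r * Real.tan (r * x) := by
        exact mul_le_mul_of_nonneg_left htan (le_of_lt hr)
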